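/- Let st ⊆ ℝ^N be compact, gd ⊆ st compact with fs := st \ gd, let F : ℝ^N → ℝ^N be globally Lipschitz with the closure of {x ∈ fs : F(x) = 0} disjoint from gd, and let α, β : st → [0,∞) be Lipschitz functions with α⁻¹(0) = β⁻¹(0) = gd. Suppose Φ_α, Φ_β : [0,∞) × st → st are continuous semiflows on st whose trajectories are differentiable with ∂Φ_α/∂t(t,x) = α(Φ_α(t,x))·F(Φ_α(t,x)) and ∂Φ_β/∂t(t,x) = β(Φ_β(t,x))·F(Φ_β(t,x)). Define gd to be asymptotically stable for a semiflow Φ on st if (i) for every open set U ⊇ gd there is an open set W ⊇ gd with Φ(t,x) ∈ U for all t ≥ 0 and all x ∈ W ∩ st, and (ii) there is an open set W₀ ⊇ gd such that for every x ∈ W₀ ∩ st the distance from Φ(t,x) to gd tends to 0 as t → ∞. Then gd is asymptotically stable for Φ_α if and only if gd is asymptotically stable for Φ_β. -/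

import Mathlib

open Set Filter Topology

/-- `gd` is asymptotically stable for the semiflow `Φ` on `st`: (i) every open
set `U ⊇ gd` contains the forward orbit of some open set `W ⊇ gd` (intersected
with `st`), and (ii) some open set `W₀ ⊇ gd` is contained in the basin of
attraction of `gd`. -/
def IsAsympStableFor {N : ℕ} (st gd : Set (EuclideanSpace ℝ (Fin N)))
    (Φ : ℝ → EuclideanSpace ℝ (Fin N) → EuclideanSpace ℝ (Fin N)) : Prop :=
  (∀ U : Set (EuclideanSpace ℝ (Fin N)), IsOpen U → gd ⊆ U →
    ∃ W : Set (EuclideanSpace ℝ (Fin N)), IsOpen W ∧ gd ⊆ W ∧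
      ∀ x ∈ W ∩ st, ∀ t : ℝ, 0 ≤ t → Φ t x ∈ U) ∧
  (∃ W₀ : Set (EuclideanSpace ℝ (Fin N)), IsOpen W₀ ∧ gd ⊆ W₀ ∧
    ∀ x ∈ W₀ ∩ st,
      Tendsto (fun t : ℝ => Metric.infDist (Φ t x) gd) atTop (𝓝 0))

section Helpers

variable {E : Type*} [NormedAddCommGroup E] [NormedSpace ℝ E] [CompleteSpace E]

/-- Lipschitz-type bound for the rescaled field `z ↦ γ z • F z` on a compact set. -/
lemma lip_smul_field {st : Set E} (hst : IsCompact st) {γ : E → ℝ} {K : NNReal}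
    (hγ : LipschitzOnWith K γ st) {F : E → E} {L : ℝ} (hL : 0 ≤ L)
    (hF : ∀ x y, ‖F x - F y‖ ≤ L * ‖x - y‖) :
    ∃ M : ℝ, 0 ≤ M ∧ ∀ z ∈ st, ∀ w ∈ st, ‖γ z • F z - γ w • F w‖ ≤ M * ‖z - w‖ := by
  have hFlip : LipschitzWith L.toNNReal F := by
    apply LipschitzWith.of_dist_le_mul
    intro x y
    simpa [dist_eq_norm, Real.coe_toNNReal L hL] using hF x y
  obtain ⟨C1, hC1⟩ := hst.exists_bound_of_continuousOn hγ.continuousOn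
  obtain ⟨C2, hC2⟩ := hst.exists_bound_of_continuousOn hFlip.continuous.continuousOn
  refine ⟨(max C1 0) * L + (K : ℝ) * max C2 0,
    by positivity, fun z hz w hw => ?_⟩
  have key : γ z • F z - γ w • F w = γ z • (F z - F w) + (γ z - γ w) • F w := by
    rw [smul_sub, sub_smul]; abel
  rw [key]
  have h1 : ‖γ z • (F z - F w)‖ ≤ (max C1 0) * (L * ‖z - w‖) := by
    rw [norm_smul]
    apply mul_le_mul _ (hF z w) (norm_nonneg _) (le_max_right _ _)
    exact le_trans (hC1 z hz) (le_max_left _ _)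
  have h2 : ‖(γ z - γ w) • F w‖ ≤ ((K : ℝ) * ‖z - w‖) * max C2 0 := by
    rw [norm_smul]
    apply mul_le_mul _ (le_trans (hC2 w hw) (le_max_left _ _)) (norm_nonneg _)
      (by positivity)
    have := hγ.dist_le_mul z hz w hw
    rwa [Real.dist_eq, dist_eq_norm] at this
  calc ‖γ z • (F z - F w) + (γ z - γ w) • F w‖
      ≤ ‖γ z • (F z - F w)‖ + ‖(γ z - γ w) • F w‖ := norm_add_le _ _
    _ ≤ (max C1 0) * (L * ‖z - w‖) + ((K : ℝ) * ‖z - w‖) * max C2 0 := add_le_add h1 h2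
    _ = ((max C1 0) * L + (K : ℝ) * max C2 0) * ‖z - w‖ := by ring

lemma lipOn_of_bound {st : Set E} {G : E → E} {M : ℝ} (hM0 : 0 ≤ M)
    (hM : ∀ z ∈ st, ∀ w ∈ st, ‖G z - G w‖ ≤ M * ‖z - w‖) :
    LipschitzOnWith M.toNNReal G st := by
  rw [lipschitzOnWith_iff_dist_le_mul]
  intro x hx y hy
  simpa [dist_eq_norm, Real.coe_toNNReal M hM0] using hM x hx y hy

lemma traj_cont {st : Set E} {Φ : ℝ → E → E}
    (hΦ_cont : ContinuousOn (fun p : ℝ × E => Φ p.1 p.2) (Set.Ici (0 : ℝ) ×ˢ st))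
    {x : E} (hx : x ∈ st) : ContinuousOn (fun s => Φ s x) (Ici (0:ℝ)) :=
  hΦ_cont.comp (continuous_id.prodMk continuous_const).continuousOn
    (fun s hs => ⟨hs, hx⟩)

lemma fix_of_equilibrium {st : Set E} {γ : E → ℝ} {F : E → E} {Φ : ℝ → E → E} {M : ℝ}
    (hM0 : 0 ≤ M)
    (hM : ∀ z ∈ st, ∀ w ∈ st, ‖γ z • F z - γ w • F w‖ ≤ M * ‖z - w‖)
    (hΦ_cont : ContinuousOn (fun p : ℝ × E => Φ p.1 p.2) (Set.Ici (0 : ℝ) ×ˢ st))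
    (hΦ_maps : ∀ t : ℝ, 0 ≤ t → ∀ x ∈ st, Φ t x ∈ st)
    (hΦ_zero : ∀ x ∈ st, Φ 0 x = x)
    (hΦ_deriv : ∀ x ∈ st, ∀ t : ℝ, 0 ≤ t →
      HasDerivWithinAt (fun τ : ℝ => Φ τ x) (γ (Φ t x) • F (Φ t x)) (Set.Ici (0 : ℝ)) t)
    {y : E} (hy : y ∈ st) (h0 : γ y • F y = 0) :
    ∀ t : ℝ, 0 ≤ t → Φ t y = y := by
  intro t ht
  have hv : ∀ s : ℝ, LipschitzOnWith M.toNNReal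
      (fun z => γ z • F z) ((fun _ : ℝ => st) s) := fun _ => lipOn_of_bound hM0 hM
  have := ODE_solution_unique_of_mem_Icc_right (v := fun _ z => γ z • F z)
    (s := fun _ => st) (fun r _ => hv r)
    (f := fun s => Φ s y) (g := fun _ => y) (a := 0) (b := t)
    ((traj_cont hΦ_cont hy).mono Icc_subset_Ici_self)
    (fun s hs => (hΦ_deriv y hy s hs.1).mono (Ici_subset_Ici.2 hs.1))
    (fun s hs => hΦ_maps s hs.1 y hy)
    continuousOn_const
    (fun s _ => by simpa [h0] using (hasDerivWithinAt_const s (Ici s) y))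
    (fun _ _ => hy) (hΦ_zero y hy)
  have h2 := this (right_mem_Icc.2 ht)
  simpa using h2

lemma no_touch {st gd : Set E} {γ : E → ℝ} {F : E → E} {Φ : ℝ → E → E} {M : ℝ}
    (hM0 : 0 ≤ M)
    (hM : ∀ z ∈ st, ∀ w ∈ st, ‖γ z • F z - γ w • F w‖ ≤ M * ‖z - w‖)
    (hγ_zero : ∀ x ∈ st, (γ x = 0 ↔ x ∈ gd))
    (hΦ_cont : ContinuousOn (fun p : ℝ × E => Φ p.1 p.2) (Set.Ici (0 : ℝ) ×ˢ st))
    (hΦ_maps : ∀ t : ℝ, 0 ≤ t → ∀ x ∈ st, Φ t x ∈ st)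
    (hΦ_zero : ∀ x ∈ st, Φ 0 x = x)
    (hΦ_deriv : ∀ x ∈ st, ∀ t : ℝ, 0 ≤ t →
      HasDerivWithinAt (fun τ : ℝ => Φ τ x) (γ (Φ t x) • F (Φ t x)) (Set.Ici (0 : ℝ)) t)
    {x : E} (hx : x ∈ st) (hxg : x ∉ gd) :
    ∀ s : ℝ, 0 ≤ s → Φ s x ∉ gd := by
  intro s hs hmem
  rcases eq_or_lt_of_le hs with h0 | hpos
  · exact hxg (by rwa [← h0, hΦ_zero x hx] at hmem)
  set z := Φ s x with hz
  have hzst : z ∈ st := hΦ_maps s hs x hx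
  have hγz : γ z • F z = 0 := by rw [(hγ_zero z hzst).2 hmem, zero_smul]
  have hv : ∀ r : ℝ, LipschitzOnWith M.toNNReal
      (fun w => γ w • F w) ((fun _ : ℝ => st) r) := fun _ => lipOn_of_bound hM0 hM
  have key := ODE_solution_unique_of_mem_Icc_left (v := fun _ w => γ w • F w)
    (s := fun _ => st) (fun r _ => hv r)
    (f := fun r => Φ r x) (g := fun _ => z) (a := 0) (b := s)
    ((traj_cont hΦ_cont hx).mono Icc_subset_Ici_self)
    (fun r hr => (((hΦ_deriv x hx r hr.1.le).hasDerivAt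
        (Ici_mem_nhds hr.1)).hasDerivWithinAt))
    (fun r hr => hΦ_maps r hr.1.le x hx)
    continuousOn_const
    (fun r _ => by simpa [hγz] using (hasDerivWithinAt_const r (Iic r) z))
    (fun _ _ => hzst) rfl
  have : x = z := by
    have h2 := key (left_mem_Icc.2 hs)
    simp only at h2
    rwa [hΦ_zero x hx] at h2
  exact hxg (this ▸ hmem)

/-- The reparametrisation construction: for `x ∈ st \ gd` there is a continuous strictly
monotone time change `g` with `g 0 = 0` such that `Φα s x = Φβ (g s) x` for `s ≥ 0`; and
if `g` is bounded above, the `Φα`-trajectory converges to `Φβ T x` where `T = sSup (range g)`,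
which is a fixed point reached by the `Φβ`-trajectory from time `T` on. -/
lemma reparam {st gd : Set E} {F : E → E} {α β : E → ℝ} {Mα Mβ : ℝ}
    {Φα Φβ : ℝ → E → E}
    (hMα0 : 0 ≤ Mα)
    (hMα : ∀ z ∈ st, ∀ w ∈ st, ‖α z • F z - α w • F w‖ ≤ Mα * ‖z - w‖)
    (hMβ0 : 0 ≤ Mβ)
    (hMβ : ∀ z ∈ st, ∀ w ∈ st, ‖β z • F z - β w • F w‖ ≤ Mβ * ‖z - w‖)
    (hαc : ContinuousOn α st) (hβc : ContinuousOn β st)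
    (hα_nonneg : ∀ x ∈ st, 0 ≤ α x) (hβ_nonneg : ∀ x ∈ st, 0 ≤ β x)
    (hα_zero : ∀ x ∈ st, (α x = 0 ↔ x ∈ gd))
    (hβ_zero : ∀ x ∈ st, (β x = 0 ↔ x ∈ gd))
    (hΦα_cont : ContinuousOn (fun p : ℝ × E => Φα p.1 p.2) (Set.Ici (0 : ℝ) ×ˢ st))
    (hΦα_maps : ∀ t : ℝ, 0 ≤ t → ∀ x ∈ st, Φα t x ∈ st)
    (hΦα_zero : ∀ x ∈ st, Φα 0 x = x)
    (hΦα_deriv : ∀ x ∈ st, ∀ t : ℝ, 0 ≤ t →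
      HasDerivWithinAt (fun τ : ℝ => Φα τ x) (α (Φα t x) • F (Φα t x)) (Set.Ici (0 : ℝ)) t)
    (hΦβ_cont : ContinuousOn (fun p : ℝ × E => Φβ p.1 p.2) (Set.Ici (0 : ℝ) ×ˢ st))
    (hΦβ_maps : ∀ t : ℝ, 0 ≤ t → ∀ x ∈ st, Φβ t x ∈ st)
    (hΦβ_zero : ∀ x ∈ st, Φβ 0 x = x)
    (hΦβ_semigroup : ∀ t s : ℝ, 0 ≤ t → 0 ≤ s → ∀ x ∈ st,
      Φβ (t + s) x = Φβ t (Φβ s x))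
    (hΦβ_deriv : ∀ x ∈ st, ∀ t : ℝ, 0 ≤ t →
      HasDerivWithinAt (fun τ : ℝ => Φβ τ x) (β (Φβ t x) • F (Φβ t x)) (Set.Ici (0 : ℝ)) t)
    {x : E} (hx : x ∈ st) (hxg : x ∉ gd) :
    ∃ g : ℝ → ℝ, Continuous g ∧ StrictMono g ∧ g 0 = 0 ∧
      (∀ s, 0 ≤ s → Φα s x = Φβ (g s) x) ∧
      (BddAbove (range g) →
        0 ≤ sSup (range g) ∧
        Tendsto (fun s => Φα s x) atTop (𝓝 (Φβ (sSup (range g)) x)) ∧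
        ∀ t, sSup (range g) ≤ t → Φβ t x = Φβ (sSup (range g)) x) := by
  classical
  -- the (clamped) trajectory
  set ψ : ℝ → E := fun r => Φα (max r 0) x with hψdef
  have hψcont : Continuous ψ :=
    (traj_cont hΦα_cont hx).comp_continuous (continuous_id.max continuous_const)
      (fun r => mem_Ici.2 (le_max_right _ _))
  have hψst : ∀ r, ψ r ∈ st := fun r => hΦα_maps _ (le_max_right r 0) x hx
  have hψgd : ∀ r, ψ r ∉ gd := fun r =>
    no_touch hMα0 hMα hα_zero hΦα_cont hΦα_maps hΦα_zero hΦα_deriv hx hxg _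
      (le_max_right r 0)
  have hψeq : ∀ s : ℝ, 0 ≤ s → ψ s = Φα s x := fun s hs => by
    simp [hψdef, max_eq_left hs]
  have hβψpos : ∀ r, 0 < β (ψ r) := fun r =>
    lt_of_le_of_ne (hβ_nonneg _ (hψst r))
      (fun h => hψgd r ((hβ_zero _ (hψst r)).1 h.symm))
  have hαψpos : ∀ r, 0 < α (ψ r) := fun r =>
    lt_of_le_of_ne (hα_nonneg _ (hψst r))
      (fun h => hψgd r ((hα_zero _ (hψst r)).1 h.symm))
  -- the speed ratio and the time change
  set f : ℝ → ℝ := fun r => α (ψ r) / β (ψ r) with hfdef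
  have hfcont : Continuous f := by
    apply Continuous.div (hαc.comp_continuous hψcont hψst)
      (hβc.comp_continuous hψcont hψst) (fun r => (hβψpos r).ne')
  have hfpos : ∀ r, 0 < f r := fun r => div_pos (hαψpos r) (hβψpos r)
  set g : ℝ → ℝ := fun r => ∫ u in (0:ℝ)..r, f u with hgdef
  have hg0 : g 0 = 0 := intervalIntegral.integral_same
  have hgderiv : ∀ r, HasDerivAt g (f r) r := fun r =>
    intervalIntegral.integral_hasDerivAt_right (hfcont.intervalIntegrable _ _)
      (hfcont.stronglyMeasurableAtFilter _ _) hfcont.continuousAt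
  have hgcont : Continuous g :=
    continuous_iff_continuousAt.2 fun r => (hgderiv r).continuousAt
  have hgmono : StrictMono g := by
    apply strictMono_of_deriv_pos
    intro r; rw [(hgderiv r).deriv]; exact hfpos r
  have hgnn : ∀ s : ℝ, 0 ≤ s → 0 ≤ g s := fun s hs => by
    rw [← hg0]; exact hgmono.monotone hs
  -- the key conjugation identity
  have key : ∀ s : ℝ, 0 ≤ s → Φα s x = Φβ (g s) x := by
    intro s hs
    obtain ⟨C, hC⟩ := isCompact_Icc.exists_bound_of_continuousOn
      (hfcont.continuousOn : ContinuousOn f (Icc 0 s))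
    have hC0 : 0 ≤ C := le_trans (norm_nonneg _) (hC 0 (left_mem_Icc.2 hs))
    set fc : ℝ → ℝ := fun r => f (min (max r 0) s) with hfcdef
    have hfc_mem : ∀ r, min (max r 0) s ∈ Icc (0:ℝ) s := fun r =>
      ⟨le_min (le_max_right _ _) hs, min_le_right _ _⟩
    have hfc_bdd : ∀ r, |fc r| ≤ C := fun r => by
      simpa [Real.norm_eq_abs] using hC _ (hfc_mem r)
    have hfc_eq : ∀ r ∈ Ico (0:ℝ) s, fc r = f r := fun r hr => by
      rw [hfcdef]; simp only
      rw [max_eq_left hr.1, min_eq_left hr.2.le]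
    set v : ℝ → E → E := fun r z => fc r • (β z • F z) with hvdef
    have hv : ∀ r : ℝ, LipschitzOnWith (C * Mβ).toNNReal (v r)
        ((fun _ : ℝ => st) r) := by
      intro r
      apply lipOn_of_bound (by positivity)
      intro z hz w hw
      have : v r z - v r w = fc r • (β z • F z - β w • F w) := by
        rw [hvdef]; simp only [smul_sub]
      rw [this, norm_smul, Real.norm_eq_abs]
      calc |fc r| * ‖β z • F z - β w • F w‖
          ≤ C * (Mβ * ‖z - w‖) :=
            mul_le_mul (hfc_bdd r) (hMβ z hz w hw) (norm_nonneg _) hC0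
        _ = C * Mβ * ‖z - w‖ := by ring
    have huniq := ODE_solution_unique_of_mem_Icc_right (v := v)
      (s := fun _ => st) (fun r _ => hv r)
      (f := fun r => Φα r x) (g := fun r => Φβ (g r) x) (a := 0) (b := s)
      ?_ ?_ ?_ ?_ ?_ ?_ ?_
    · exact huniq (right_mem_Icc.2 hs)
    · exact (traj_cont hΦα_cont hx).mono Icc_subset_Ici_self
    · -- derivative of the α-trajectory
      intro r hr
      have hd := (hΦα_deriv x hx r hr.1).mono (Ici_subset_Ici.2 hr.1)
      have : v r (Φα r x) = α (Φα r x) • F (Φα r x) := by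
        rw [hvdef]; simp only
        rw [hfc_eq r hr, smul_smul, hfdef]
        simp only
        rw [hψeq r hr.1, div_mul_cancel₀]
        exact ((hψeq r hr.1) ▸ (hβψpos r)).ne'
      rwa [this]
    · exact fun r hr => hΦα_maps r hr.1 x hx
    · -- continuity of the reparametrised β-trajectory
      apply (traj_cont hΦβ_cont hx).comp hgcont.continuousOn
      intro r hr; exact hgnn r hr.1
    · -- derivative of the reparametrised β-trajectory
      intro r hr
      have hβd : HasDerivWithinAt (fun τ => Φβ τ x)
          (β (Φβ (g r) x) • F (Φβ (g r) x)) (Ici 0) (g r) :=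
        hΦβ_deriv x hx (g r) (hgnn r hr.1)
      have hgd : HasDerivWithinAt g (f r) (Ici r) r := (hgderiv r).hasDerivWithinAt
      have hmaps : MapsTo g (Ici r) (Ici (0:ℝ)) := fun u hu =>
        hgnn u (le_trans hr.1 hu)
      have := hβd.scomp r hgd hmaps
      have hveq : v r (Φβ (g r) x) = f r • β (Φβ (g r) x) • F (Φβ (g r) x) := by
        rw [hvdef]; simp only; rw [hfc_eq r hr]
      rw [hveq]
      exact this
    · exact fun r hr => hΦβ_maps (g r) (hgnn r hr.1) x hx
    · rw [hΦα_zero x hx, hg0, hΦβ_zero x hx]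
  refine ⟨g, hgcont, hgmono, hg0, key, ?_⟩
  -- the bounded case
  intro hbdd
  set T := sSup (range g) with hTdef
  have hT0 : 0 ≤ T := by rw [← hg0]; exact le_csSup hbdd (mem_range_self 0)
  have hgtend : Tendsto g atTop (𝓝 T) := tendsto_atTop_ciSup hgmono.monotone hbdd
  have hylim : Tendsto (fun s => Φα s x) atTop (𝓝 (Φβ T x)) := by
    have h1 : Tendsto g atTop (𝓝[Ici (0:ℝ)] T) :=
      tendsto_nhdsWithin_of_tendsto_nhds_of_eventually_within _ hgtend
        (eventually_atTop.2 ⟨0, fun s hs => hgnn s hs⟩)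
    have h2 := (((traj_cont hΦβ_cont hx) T hT0).tendsto).comp h1
    apply h2.congr'
    filter_upwards [eventually_ge_atTop (0:ℝ)] with s hs
    exact ((key s hs).symm : Φβ (g s) x = Φα s x) ▸ rfl
  refine ⟨hT0, hylim, ?_⟩
  -- the limit point is an equilibrium
  have hyst : Φβ T x ∈ st := hΦβ_maps T hT0 x hx
  set y := Φβ T x with hydef
  have hGacont : ContinuousOn (fun z => α z • F z) st :=
    (lipOn_of_bound hMα0 hMα).continuousOn
  have hGtraj : ContinuousOn (fun r => α (Φα r x) • F (Φα r x)) (Ici (0:ℝ)) :=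
    hGacont.comp (traj_cont hΦα_cont hx) (fun r hr => hΦα_maps r hr x hx)
  have heq : α y • F y = 0 := by
    have hGy : Tendsto (fun s => α (Φα s x) • F (Φα s x)) atTop (𝓝 (α y • F y)) := by
      have h1 : Tendsto (fun s => Φα s x) atTop (𝓝[st] y) :=
        tendsto_nhdsWithin_of_tendsto_nhds_of_eventually_within _ hylim
          (eventually_atTop.2 ⟨0, fun s hs => hΦα_maps s hs x hx⟩)
      exact ((hGacont y hyst).tendsto).comp h1
    set I : ℝ → E := fun s => Φα (s+1) x - Φα s x with hIdef
    have hI0 : Tendsto I atTop (𝓝 0) := by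
      have h1 : Tendsto (fun s => Φα (s+1) x) atTop (𝓝 y) :=
        hylim.comp (tendsto_atTop_add_const_right atTop 1 tendsto_id)
      simpa using h1.sub hylim
    have hIint : ∀ s : ℝ, 1 ≤ s →
        I s = ∫ r in s..(s+1), α (Φα r x) • F (Φα r x) := by
      intro s hs
      have hsub : uIcc s (s+1) ⊆ Ici (0:ℝ) := by
        rw [uIcc_of_le (by linarith)]
        intro r hr
        have h1 := hr.1
        simp only [mem_Ici]
        linarith
      have hint : IntervalIntegrable (fun r => α (Φα r x) • F (Φα r x))
          MeasureTheory.volume s (s+1) :=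
        (hGtraj.mono hsub).intervalIntegrable
      have hderiv : ∀ r ∈ uIcc s (s+1),
          HasDerivAt (fun τ => Φα τ x) (α (Φα r x) • F (Φα r x)) r := by
        intro r hr
        rw [uIcc_of_le (by linarith)] at hr
        have hr0 : 0 < r := by linarith [hr.1]
        exact (hΦα_deriv x hx r hr0.le).hasDerivAt (Ici_mem_nhds hr0)
      rw [hIdef]
      simp only
      rw [intervalIntegral.integral_eq_sub_of_hasDerivAt hderiv hint]
    have hItend : Tendsto I atTop (𝓝 (α y • F y)) := by
      rw [Metric.tendsto_atTop]
      intro ε hε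
      rw [Metric.tendsto_atTop] at hGy
      obtain ⟨R, hR⟩ := hGy (ε/2) (by linarith)
      refine ⟨max R 1, fun s hs => ?_⟩
      have hs1 : 1 ≤ s := le_trans (le_max_right R 1) hs
      have hsR : R ≤ s := le_trans (le_max_left R 1) hs
      have hsub : uIcc s (s+1) ⊆ Ici (0:ℝ) := by
        rw [uIcc_of_le (by linarith)]
        intro r hr
        have h1 := hr.1
        simp only [mem_Ici]
        linarith
      have hint : IntervalIntegrable (fun r => α (Φα r x) • F (Φα r x))
          MeasureTheory.volume s (s+1) :=
        (hGtraj.mono hsub).intervalIntegrable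
      have hconst : (α y • F y : E) = ∫ _ in s..(s+1), (α y • F y : E) := by
        rw [intervalIntegral.integral_const]
        simp
      rw [dist_eq_norm, hIint s hs1, hconst,
        ← intervalIntegral.integral_sub hint (intervalIntegrable_const)]
      have hbound : ∀ r ∈ Set.uIoc s (s+1),
          ‖α (Φα r x) • F (Φα r x) - α y • F y‖ ≤ ε/2 := by
        intro r hr
        rw [Set.uIoc_of_le (by linarith : s ≤ s+1)] at hr
        have := hR r (le_trans hsR hr.1.le)
        rw [dist_eq_norm] at this
        linarith
      calc ‖∫ r in s..(s+1), (α (Φα r x) • F (Φα r x) - α y • F y)‖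
          ≤ ε/2 * |s+1-s| := intervalIntegral.norm_integral_le_of_norm_le_const hbound
        _ < ε := by rw [show s+1-s = 1 by ring]; simp; linarith
    exact tendsto_nhds_unique hItend hI0
  have hβy : β y • F y = 0 := by
    rcases smul_eq_zero.1 heq with hαy | hFy
    · rw [(hβ_zero y hyst).2 ((hα_zero y hyst).1 hαy), zero_smul]
    · rw [hFy, smul_zero]
  have hfix : ∀ r : ℝ, 0 ≤ r → Φβ r y = y :=
    fix_of_equilibrium hMβ0 hMβ hΦβ_cont hΦβ_maps hΦβ_zero hΦβ_deriv hyst hβy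
  intro t ht
  have : Φβ t x = Φβ (t - T) (Φβ T x) := by
    rw [← hΦβ_semigroup (t-T) T (by linarith) hT0 x hx]
    ring_nf
  rw [this, ← hydef, hfix (t-T) (by linarith)]


lemma exists_preimage_aux {g : ℝ → ℝ} (hgc : Continuous g) (hgm : StrictMono g)
    (hg0 : g 0 = 0) {t s₀ : ℝ} (ht : 0 ≤ t) (hts : t ≤ g s₀) :
    ∃ s, 0 ≤ s ∧ g s = t := by
  have h0 : (0:ℝ) ≤ s₀ := by
    by_contra h
    push_neg at h
    have h2 := hgm h
    rw [hg0] at h2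
    linarith
  obtain ⟨s, hs, hgs⟩ := intermediate_value_Icc h0 hgc.continuousOn
    (show t ∈ Icc (g 0) (g s₀) from ⟨by rw [hg0]; exact ht, hts⟩)
  exact ⟨s, hs.1, hgs⟩

end Helpers

lemma one_direction {N : ℕ}
    (st gd : Set (EuclideanSpace ℝ (Fin N)))
    (hst : IsCompact st) (hgd : IsCompact gd) (hgdsub : gd ⊆ st)
    (F : EuclideanSpace ℝ (Fin N) → EuclideanSpace ℝ (Fin N))
    (L : ℝ) (hL : 0 ≤ L) (hF : ∀ x y, ‖F x - F y‖ ≤ L * ‖x - y‖)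
    (α β : EuclideanSpace ℝ (Fin N) → ℝ) (Kα Kβ : NNReal)
    (hα_lip : LipschitzOnWith Kα α st) (hβ_lip : LipschitzOnWith Kβ β st)
    (hα_nonneg : ∀ x ∈ st, 0 ≤ α x) (hβ_nonneg : ∀ x ∈ st, 0 ≤ β x)
    (hα_zero : ∀ x ∈ st, (α x = 0 ↔ x ∈ gd))
    (hβ_zero : ∀ x ∈ st, (β x = 0 ↔ x ∈ gd))
    (Φα Φβ : ℝ → EuclideanSpace ℝ (Fin N) → EuclideanSpace ℝ (Fin N))
    (hΦα_cont : ContinuousOn (fun p : ℝ × EuclideanSpace ℝ (Fin N) => Φα p.1 p.2)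
      (Set.Ici (0 : ℝ) ×ˢ st))
    (hΦα_maps : ∀ t : ℝ, 0 ≤ t → ∀ x ∈ st, Φα t x ∈ st)
    (hΦα_zero : ∀ x ∈ st, Φα 0 x = x)
    (hΦα_deriv : ∀ x ∈ st, ∀ t : ℝ, 0 ≤ t →
      HasDerivWithinAt (fun τ : ℝ => Φα τ x) (α (Φα t x) • F (Φα t x))
        (Set.Ici (0 : ℝ)) t)
    (hΦβ_cont : ContinuousOn (fun p : ℝ × EuclideanSpace ℝ (Fin N) => Φβ p.1 p.2)
      (Set.Ici (0 : ℝ) ×ˢ st))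
    (hΦβ_maps : ∀ t : ℝ, 0 ≤ t → ∀ x ∈ st, Φβ t x ∈ st)
    (hΦβ_zero : ∀ x ∈ st, Φβ 0 x = x)
    (hΦβ_semigroup : ∀ t s : ℝ, 0 ≤ t → 0 ≤ s → ∀ x ∈ st,
      Φβ (t + s) x = Φβ t (Φβ s x))
    (hΦβ_deriv : ∀ x ∈ st, ∀ t : ℝ, 0 ≤ t →
      HasDerivWithinAt (fun τ : ℝ => Φβ τ x) (β (Φβ t x) • F (Φβ t x))
        (Set.Ici (0 : ℝ)) t)
    (hA : IsAsympStableFor st gd Φα) :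
    IsAsympStableFor st gd Φβ := by
  obtain ⟨hSt, hAt⟩ := hA
  obtain ⟨Mα, hMα0, hMα⟩ := lip_smul_field hst hα_lip hL hF
  obtain ⟨Mβ, hMβ0, hMβ⟩ := lip_smul_field hst hβ_lip hL hF
  have hfixβ : ∀ y ∈ gd, ∀ t : ℝ, 0 ≤ t → Φβ t y = y := fun y hy t ht =>
    fix_of_equilibrium hMβ0 hMβ hΦβ_cont hΦβ_maps hΦβ_zero hΦβ_deriv
      (hgdsub hy) (by rw [(hβ_zero y (hgdsub hy)).2 hy, zero_smul]) t ht
  have hreparam := fun (x : EuclideanSpace ℝ (Fin N)) (hx : x ∈ st) (hxg : x ∉ gd) =>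
    reparam hMα0 hMα hMβ0 hMβ hα_lip.continuousOn hβ_lip.continuousOn
      hα_nonneg hβ_nonneg hα_zero hβ_zero
      hΦα_cont hΦα_maps hΦα_zero hΦα_deriv
      hΦβ_cont hΦβ_maps hΦβ_zero hΦβ_semigroup hΦβ_deriv hx hxg
  constructor
  · -- stability
    intro U hU hgdU
    obtain ⟨δ, hδ0, hδ⟩ := hgd.exists_cthickening_subset_open hU hgdU
    set V := Metric.thickening δ gd with hVdef
    have hVopen : IsOpen V := Metric.isOpen_thickening
    have hgdV : gd ⊆ V := Metric.self_subset_thickening hδ0 _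
    have hclV : closure V ⊆ U :=
      le_trans (Metric.closure_thickening_subset_cthickening δ gd) hδ
    have hVU : V ⊆ U := subset_closure.trans hclV
    obtain ⟨W, hWopen, hgdW, hW⟩ := hSt V hVopen hgdV
    refine ⟨W, hWopen, hgdW, ?_⟩
    rintro x ⟨hxW, hxst⟩ t ht
    by_cases hxg : x ∈ gd
    · rw [hfixβ x hxg t ht]; exact hgdU hxg
    obtain ⟨g, hgcont, hgmono, hg0, hkey, hbddcase⟩ := hreparam x hxst hxg
    by_cases hbdd : BddAbove (range g)
    · obtain ⟨hT0, hylim, hfixT⟩ := hbddcase hbdd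
      rcases lt_or_ge t (sSup (range g)) with hlt | hge
      · obtain ⟨z, ⟨s₀, rfl⟩, hz⟩ := exists_lt_of_lt_csSup (range_nonempty g) hlt
        obtain ⟨s, hs0, hgs⟩ := exists_preimage_aux hgcont hgmono hg0 ht hz.le
        rw [← hgs, ← hkey s hs0]
        exact hVU (hW x ⟨hxW, hxst⟩ s hs0)
      · rw [hfixT t hge]
        apply hclV
        apply mem_closure_of_tendsto hylim
        filter_upwards [eventually_ge_atTop (0:ℝ)] with s hs
        exact hW x ⟨hxW, hxst⟩ s hs
    · rw [not_bddAbove_iff] at hbdd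
      obtain ⟨z, ⟨s₀, rfl⟩, hz⟩ := hbdd t
      obtain ⟨s, hs0, hgs⟩ := exists_preimage_aux hgcont hgmono hg0 ht hz.le
      rw [← hgs, ← hkey s hs0]
      exact hVU (hW x ⟨hxW, hxst⟩ s hs0)
  · -- attraction
    obtain ⟨W₀, hW₀open, hgdW₀, hW₀⟩ := hAt
    refine ⟨W₀, hW₀open, hgdW₀, ?_⟩
    rintro x ⟨hxW, hxst⟩
    by_cases hxg : x ∈ gd
    · apply Tendsto.congr' _ (tendsto_const_nhds (α := ℝ) (x := (0:ℝ)))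
      filter_upwards [eventually_ge_atTop (0:ℝ)] with t ht
      rw [hfixβ x hxg t ht]
      exact (Metric.infDist_zero_of_mem hxg).symm
    obtain ⟨g, hgcont, hgmono, hg0, hkey, hbddcase⟩ := hreparam x hxst hxg
    have hαtend := hW₀ x ⟨hxW, hxst⟩
    by_cases hbdd : BddAbove (range g)
    · obtain ⟨hT0, hylim, hfixT⟩ := hbddcase hbdd
      have hy0 : Metric.infDist (Φβ (sSup (range g)) x) gd = 0 := by
        have h1 : Tendsto (fun s => Metric.infDist (Φα s x) gd) atTop
            (𝓝 (Metric.infDist (Φβ (sSup (range g)) x) gd)) :=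
          ((Metric.continuous_infDist_pt gd).tendsto _).comp hylim
        exact tendsto_nhds_unique h1 hαtend
      apply Tendsto.congr' _ (tendsto_const_nhds (α := ℝ) (x := (0:ℝ)))
      filter_upwards [eventually_ge_atTop (sSup (range g))] with t ht
      rw [hfixT t ht, hy0]
    · rw [Metric.tendsto_atTop] at hαtend ⊢
      intro ε hε
      obtain ⟨S, hS⟩ := hαtend ε hε
      refine ⟨max (g (max S 0)) 0, fun t ht => ?_⟩
      have ht0 : 0 ≤ t := le_trans (le_max_right _ _) ht
      have htg : g (max S 0) ≤ t := le_trans (le_max_left _ _) ht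
      rw [not_bddAbove_iff] at hbdd
      obtain ⟨z, ⟨s₀, rfl⟩, hz⟩ := hbdd t
      obtain ⟨s, hs0, hgs⟩ := exists_preimage_aux hgcont hgmono hg0 ht0 hz.le
      have hsS : S ≤ s := by
        have h1 : g (max S 0) ≤ g s := by rw [hgs]; exact htg
        have h2 : max S 0 ≤ s := (hgmono.le_iff_le).1 h1
        exact le_trans (le_max_left _ _) h2
      rw [← hgs, ← hkey s hs0]
      exact hS s hsS

/-- **Independence of the inflowing condition from the rescaling.**  Let
`gd ⊆ st ⊆ ℝ^N` be compact, `fs = st \ gd`, `F` globally Lipschitz with the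
closure of its zero set in `fs` disjoint from `gd`, and let `α, β` be
nonnegative Lipschitz functions on `st` vanishing precisely on `gd`, with
associated rescaled semiflows `Φ_α`, `Φ_β` on `st`.  Then `gd` is
asymptotically stable for `Φ_α` iff it is asymptotically stable for `Φ_β`. -/
theorem asympStable_independent_of_rescaling {N : ℕ}
    (st gd fs : Set (EuclideanSpace ℝ (Fin N)))
    (hst : IsCompact st) (hgd : IsCompact gd) (hgdsub : gd ⊆ st)
    (hfs : fs = st \ gd)
    (F : EuclideanSpace ℝ (Fin N) → EuclideanSpace ℝ (Fin N))
    (L : ℝ) (hL : 0 ≤ L) (hF : ∀ x y, ‖F x - F y‖ ≤ L * ‖x - y‖)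
    (hdisj : Disjoint (closure {x ∈ fs | F x = 0}) gd)
    (α β : EuclideanSpace ℝ (Fin N) → ℝ) (Kα Kβ : NNReal)
    (hα_lip : LipschitzOnWith Kα α st) (hβ_lip : LipschitzOnWith Kβ β st)
    (hα_nonneg : ∀ x ∈ st, 0 ≤ α x) (hβ_nonneg : ∀ x ∈ st, 0 ≤ β x)
    (hα_zero : ∀ x ∈ st, (α x = 0 ↔ x ∈ gd))
    (hβ_zero : ∀ x ∈ st, (β x = 0 ↔ x ∈ gd))
    (Φα Φβ : ℝ → EuclideanSpace ℝ (Fin N) → EuclideanSpace ℝ (Fin N))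
    -- `Φα` is a continuous semiflow on `st`
    (hΦα_cont : ContinuousOn (fun p : ℝ × EuclideanSpace ℝ (Fin N) => Φα p.1 p.2)
      (Set.Ici (0 : ℝ) ×ˢ st))
    (hΦα_maps : ∀ t : ℝ, 0 ≤ t → ∀ x ∈ st, Φα t x ∈ st)
    (hΦα_zero : ∀ x ∈ st, Φα 0 x = x)
    (hΦα_semigroup : ∀ t s : ℝ, 0 ≤ t → 0 ≤ s → ∀ x ∈ st,
      Φα (t + s) x = Φα t (Φα s x))
    (hΦα_deriv : ∀ x ∈ st, ∀ t : ℝ, 0 ≤ t →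
      HasDerivWithinAt (fun τ : ℝ => Φα τ x) (α (Φα t x) • F (Φα t x))
        (Set.Ici (0 : ℝ)) t)
    -- `Φβ` is a continuous semiflow on `st`
    (hΦβ_cont : ContinuousOn (fun p : ℝ × EuclideanSpace ℝ (Fin N) => Φβ p.1 p.2)
      (Set.Ici (0 : ℝ) ×ˢ st))
    (hΦβ_maps : ∀ t : ℝ, 0 ≤ t → ∀ x ∈ st, Φβ t x ∈ st)
    (hΦβ_zero : ∀ x ∈ st, Φβ 0 x = x)
    (hΦβ_semigroup : ∀ t s : ℝ, 0 ≤ t → 0 ≤ s → ∀ x ∈ st,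
      Φβ (t + s) x = Φβ t (Φβ s x))
    (hΦβ_deriv : ∀ x ∈ st, ∀ t : ℝ, 0 ≤ t →
      HasDerivWithinAt (fun τ : ℝ => Φβ τ x) (β (Φβ t x) • F (Φβ t x))
        (Set.Ici (0 : ℝ)) t) :
    IsAsympStableFor st gd Φα ↔ IsAsympStableFor st gd Φβ := by
  constructor
  · exact one_direction st gd hst hgd hgdsub F L hL hF α β Kα Kβ hα_lip hβ_lip
      hα_nonneg hβ_nonneg hα_zero hβ_zero Φα Φβ hΦα_cont hΦα_maps hΦα_zero hΦα_deriv
      hΦβ_cont hΦβ_maps hΦβ_zero hΦβ_semigroup hΦβ_deriv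
  · exact one_direction st gd hst hgd hgdsub F L hL hF β α Kβ Kα hβ_lip hα_lip
      hβ_nonneg hα_nonneg hβ_zero hα_zero Φβ Φα hΦβ_cont hΦβ_maps hΦβ_zero hΦβ_deriv
      hΦα_cont hΦα_maps hΦα_zero hΦα_semigroup hΦα_deriv
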